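/- For a binary linear code C ⊆ F_2^n and an error word e with |e| ≤ t: if nearest-codeword decoding of e fails (i.e., 0 is not the unique closest codeword to e), then there exists z ∈ e + C with z ≠ e and |z| ≤ t. Consequently, for a random [n,k] code with r = n − k and 0 ≤ t/n ≤ 1/2, the probability that C cannot correct e is at most 2^{n[H_2(t/n) − r/n]}. -/

import Mathlib

noncomputable def binEnt (x : ℝ) : ℝ := -x * Real.logb 2 x - (1 - x) * Real.logb 2 (1 - x)

lemma zmod2_ne_zero {x : ZMod 2} (h : x ≠ 0) : x = 1 := by revert h; revert x; decide

lemma zmod2_sub_eq_add (a b : ZMod 2) : a - b = a + b := by revert a b; decide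

lemma pi_sub_eq_add {n : ℕ} (a b : Fin n → ZMod 2) : a - b = a + b := by
  funext i; exact zmod2_sub_eq_add _ _

-- ball counting
lemma ball_card (n t : ℕ) :
    (Finset.univ.filter fun z : Fin n → ZMod 2 => hammingNorm z ≤ t).card
      ≤ ∑ i ∈ Finset.range (t+1), n.choose i := by
  classical
  have h := Finset.card_le_card_of_injOn
    (f := fun z : Fin n → ZMod 2 => Finset.univ.filter fun i => z i ≠ 0)
    (s := Finset.univ.filter fun z : Fin n → ZMod 2 => hammingNorm z ≤ t)
    (t := (Finset.range (t+1)).biUnion fun i => Finset.powersetCard i Finset.univ)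
    ?_ ?_
  · refine h.trans ?_
    refine (Finset.card_biUnion_le).trans ?_
    apply Finset.sum_le_sum
    intro i _
    rw [Finset.card_powersetCard]
    simp
  · intro z hz
    simp only [Finset.coe_filter, Finset.mem_coe, Finset.mem_filter, Finset.mem_univ, true_and, Set.mem_setOf_eq] at hz
    rw [Finset.mem_coe, Finset.mem_biUnion]
    refine ⟨hammingNorm z, by simpa [Nat.lt_succ_iff] using hz, ?_⟩
    rw [Finset.mem_powersetCard]
    constructor
    · exact Finset.subset_univ _
    · simp [hammingNorm]
  · intro z _ w _ hzw
    funext i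
    have hi := Finset.ext_iff.mp hzw i
    simp only [Finset.mem_filter, Finset.mem_univ, true_and] at hi
    rcases eq_or_ne (z i) 0 with h1 | h1
    · rcases eq_or_ne (w i) 0 with h2 | h2
      · rw [h1, h2]
      · exact absurd (hi.2 h2) (by simp [h1])
    · rw [zmod2_ne_zero h1, zmod2_ne_zero (hi.1 h1)]

lemma vecMul_update (k n : ℕ) (u : Fin k → ZMod 2) (j : Fin k)
    (G : Matrix (Fin k) (Fin n) (ZMod 2)) (w : Fin n → ZMod 2) :
    Matrix.vecMul u (Function.update G j w) = Matrix.vecMul u G + u j • (w - G j) := by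
  funext c
  simp only [Matrix.vecMul, dotProduct, Pi.add_apply, Pi.smul_apply, Pi.sub_apply]
  have : (fun i => u i * (Function.update G j w) i c)
      = Function.update (fun i => u i * G i c) j (u j * w c) := by
    funext i
    rcases eq_or_ne i j with rfl | h
    · simp [Function.update]
    · simp [Function.update, h]
  rw [show ∑ i, u i * Function.update G j w i c = ∑ i, (fun i => u i * (Function.update G j w) i c) i from rfl, this]
  rw [Finset.sum_update_of_mem (Finset.mem_univ j)]
  rw [← Finset.add_sum_erase _ _ (Finset.mem_univ j)]
  have : Finset.univ \ {j} = Finset.univ.erase j := by ext; simp [Finset.mem_erase, and_comm]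
  rw [this]
  rw [smul_eq_mul]; ring

lemma card_row_fixed (k n : ℕ) (j : Fin k) (v : Fin n → ZMod 2) :
    (Finset.univ.filter fun G : Matrix (Fin k) (Fin n) (ZMod 2) => G j = v).card
      = 2^((k-1)*n) := by
  rw [← Fintype.card_subtype]
  have e : {G : Matrix (Fin k) (Fin n) (ZMod 2) // G j = v}
      ≃ ({i : Fin k // i ≠ j} → Fin n → ZMod 2) :=
    { toFun := fun G i => G.1 i.1
      invFun := fun f => ⟨fun i => if h : i = j then v else f ⟨i, h⟩, by simp⟩
      left_inv := by
        rintro ⟨G, hG⟩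
        ext i c
        by_cases h : i = j
        · subst h; simp [hG]
        · simp [h]
      right_inv := by
        intro f
        funext i c
        simp [i.2] }
  rw [Fintype.card_congr e, Fintype.card_fun]
  have h1 : Fintype.card {i : Fin k // i ≠ j} = k - 1 := by
    simp [Fintype.card_subtype_compl, Fintype.card_subtype_eq]
  rw [h1]
  have : Fintype.card (Fin n → ZMod 2) = 2 ^ n := by
    rw [Fintype.card_fun]; simp
  rw [this, ← pow_mul, mul_comm n (k-1)]

lemma fiber_card (k n : ℕ) (u : Fin k → ZMod 2) (hu : u ≠ 0) (v : Fin n → ZMod 2) :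
    (Finset.univ.filter fun G : Matrix (Fin k) (Fin n) (ZMod 2) => Matrix.vecMul u G = v).card
      = 2^((k-1)*n) := by
  obtain ⟨j, hj⟩ : ∃ j, u j ≠ 0 := by
    by_contra h; push_neg at h; exact hu (funext fun i => h i)
  have hj1 : u j = 1 := zmod2_ne_zero hj
  have h2 : ∀ x : Fin n → ZMod 2, x + x = 0 := by
    intro x; funext c
    have : ∀ a : ZMod 2, a + a = 0 := by decide
    exact this _
  set φ : Matrix (Fin k) (Fin n) (ZMod 2) → Matrix (Fin k) (Fin n) (ZMod 2) :=
    fun G => Function.update G j (Matrix.vecMul u G) with hφ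
  have hvm : ∀ G, Matrix.vecMul u (φ G) = G j := by
    intro G
    rw [hφ]
    simp only
    rw [vecMul_update, hj1, one_smul]
    have : Matrix.vecMul u G + (Matrix.vecMul u G - G j)
        = (Matrix.vecMul u G + Matrix.vecMul u G) - G j := by abel
    rw [this, h2, zero_sub]
    funext c
    have : ∀ a : ZMod 2, -a = a := by decide
    exact this _
  have hinv : ∀ G, φ (φ G) = G := by
    intro G
    show Function.update (φ G) j (Matrix.vecMul u (φ G)) = G
    rw [hvm G]
    show Function.update (Function.update G j (Matrix.vecMul u G)) j (G j) = G
    rw [Function.update_idem (f := (G : Fin k → Fin n → ZMod 2))]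
    exact Function.update_eq_self j G
  rw [← card_row_fixed k n j v]
  apply Finset.card_bij' (fun G _ => φ G) (fun G _ => φ G)
  · intro G hG
    simp only [Finset.mem_filter, Finset.mem_univ, true_and] at hG ⊢
    rw [hφ]; simp [hG]; exact Function.update_self j v G
  · intro G hG
    simp only [Finset.mem_filter, Finset.mem_univ, true_and] at hG ⊢
    rw [hvm]
    exact hG
  · intro G _; exact hinv G
  · intro G _; exact hinv G

lemma sum_choose_le (n t : ℕ) (hn : 0 < n) (ht : 0 < t) (hhalf : (t:ℝ)/n ≤ 1/2) :
    (∑ i ∈ Finset.range (t+1), (n.choose i : ℝ)) ≤ (2:ℝ) ^ ((n:ℝ) * binEnt ((t:ℝ)/n)) := by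
  have hn' : (0:ℝ) < n := by exact_mod_cast hn
  set p : ℝ := (t:ℝ)/n with hp_def
  have hp : 0 < p := div_pos (by exact_mod_cast ht) hn'
  set q : ℝ := 1 - p with hq_def
  have hq : 0 < q := by simp only [hq_def]; linarith
  have hpq : p ≤ q := by simp only [hq_def]; linarith
  have htn : t ≤ n := by
    by_contra h
    push_neg at h
    have : (1:ℝ) ≤ p := by
      rw [hp_def, le_div_iff₀ hn']
      have : (n:ℝ) ≤ t := by exact_mod_cast h.le
      linarith
    linarith
  have h1 : ∑ i ∈ Finset.range (t+1), (n.choose i : ℝ) * (p^i * q^(n-i)) ≤ 1 := by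
    have hbin : (p + q)^n = ∑ i ∈ Finset.range (n+1), p^i * q^(n-i) * (n.choose i) :=
      add_pow p q n
    have hone : (p + q)^n = 1 := by simp [hq_def]
    calc ∑ i ∈ Finset.range (t+1), (n.choose i : ℝ) * (p^i * q^(n-i))
        = ∑ i ∈ Finset.range (t+1), p^i * q^(n-i) * (n.choose i) := by
          apply Finset.sum_congr rfl; intro i _; ring
      _ ≤ ∑ i ∈ Finset.range (n+1), p^i * q^(n-i) * (n.choose i) := by
          apply Finset.sum_le_sum_of_subset_of_nonneg
          · exact Finset.range_subset_range.2 (by omega)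
          · intro i _ _
            positivity
      _ = 1 := by rw [← hbin, hone]
  have h2 : (∑ i ∈ Finset.range (t+1), (n.choose i : ℝ)) * (p^t * q^(n-t)) ≤ 1 := by
    rw [Finset.sum_mul]
    refine le_trans (Finset.sum_le_sum ?_) h1
    intro i hi
    rw [Finset.mem_range] at hi
    have hit : i ≤ t := by omega
    have key : p^t * q^(n-t) ≤ p^i * q^(n-i) := by
      have e1 : p^t = p^i * p^(t-i) := by rw [← pow_add]; congr 1; omega
      have e2 : q^(n-i) = q^(t-i) * q^(n-t) := by rw [← pow_add]; congr 1; omega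
      rw [e1, e2]
      have hple : p^(t-i) ≤ q^(t-i) := pow_le_pow_left₀ hp.le hpq _
      calc p^i * p^(t-i) * q^(n-t) ≤ p^i * q^(t-i) * q^(n-t) := by
            apply mul_le_mul_of_nonneg_right _ (by positivity)
            exact mul_le_mul_of_nonneg_left hple (by positivity)
        _ = p^i * (q^(t-i) * q^(n-t)) := by ring
    exact mul_le_mul_of_nonneg_left key (by positivity)
  have hprod : (0:ℝ) < p^t * q^(n-t) := by positivity
  have h3 : (∑ i ∈ Finset.range (t+1), (n.choose i : ℝ)) ≤ (p^t * q^(n-t))⁻¹ := by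
    rw [← one_div]
    rw [le_div_iff₀ hprod]
    exact h2
  refine h3.trans (le_of_eq ?_)
  have hexp : (n:ℝ) * binEnt p = Real.logb 2 p * (-(t:ℝ)) + Real.logb 2 q * (-((n:ℝ)-t)) := by
    unfold binEnt
    rw [← hq_def]
    have hnp : (n:ℝ) * p = t := by rw [hp_def]; field_simp
    have hnq : (n:ℝ) * q = (n:ℝ) - t := by
      rw [hq_def, hp_def]; field_simp
    linear_combination (-Real.logb 2 p) * hnp + (-Real.logb 2 q) * hnq
  rw [hexp, Real.rpow_add (by norm_num : (0:ℝ) < 2)]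
  rw [Real.rpow_mul (by norm_num : (0:ℝ) ≤ 2), Real.rpow_mul (by norm_num : (0:ℝ) ≤ 2)]
  rw [Real.rpow_logb (by norm_num) (by norm_num) hp, Real.rpow_logb (by norm_num) (by norm_num) hq]
  rw [Real.rpow_neg hp.le, Real.rpow_neg hq.le, Real.rpow_natCast]
  have hcast : ((n:ℝ) - t) = ((n - t : ℕ) : ℝ) := by rw [Nat.cast_sub htn]
  rw [hcast, Real.rpow_natCast, mul_inv]

theorem stmt8 (n k t : ℕ) (hn : 0 < n) (hk : 0 < k) (ht : 0 < t)
    (hhalf : (t : ℝ) / n ≤ 1 / 2) (r : ℕ) (hr : r = n - k)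
    (e : Fin n → ZMod 2) (he : hammingNorm e ≤ t) :
    (∀ C : Submodule (ZMod 2) (Fin n → ZMod 2),
        ¬ (∀ c ∈ C, c ≠ 0 → hammingNorm e < hammingDist e c) →
        ∃ z : Fin n → ZMod 2, (∃ c ∈ C, z = e + c) ∧ z ≠ e ∧ hammingNorm z ≤ t) ∧
    ((Nat.card {G : Matrix (Fin k) (Fin n) (ZMod 2) //
        ¬ (∀ c ∈ Set.range (fun u : Fin k → ZMod 2 => Matrix.vecMul u G),
            c ≠ 0 → hammingNorm e < hammingDist e c)} : ℝ) /
      (Nat.card (Matrix (Fin k) (Fin n) (ZMod 2)) : ℝ) ≤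
      (2 : ℝ) ^ ((n : ℝ) * (binEnt ((t : ℝ) / n) - (r : ℝ) / n))) := by
  classical
  constructor
  · -- part (i)
    intro C hC
    push_neg at hC
    obtain ⟨c, hcC, hc0, hcd⟩ := hC
    refine ⟨e + c, ⟨c, hcC, rfl⟩, ?_, ?_⟩
    · intro h
      apply hc0
      have h' : e + c = e + 0 := by simpa using h
      exact add_left_cancel h'
    · have hd : hammingDist e c = hammingNorm (e + c) := by
        rw [hammingDist_eq_hammingNorm, neg_add_eq_sub, pi_sub_eq_add, add_comm]
      rw [← hd]
      exact le_trans hcd he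
  · -- part (ii)
    set P : Matrix (Fin k) (Fin n) (ZMod 2) → Prop := fun G =>
      ¬ (∀ c ∈ Set.range (fun u : Fin k → ZMod 2 => Matrix.vecMul u G),
            c ≠ 0 → hammingNorm e < hammingDist e c) with hP
    set B : Finset (Matrix (Fin k) (Fin n) (ZMod 2)) := Finset.univ.filter P with hB
    set V : Finset (Fin n → ZMod 2) :=
      Finset.univ.filter (fun v => v ≠ 0 ∧ hammingNorm (e + v) ≤ t) with hV
    have hn' : (0:ℝ) < n := by exact_mod_cast hn
    -- Nat.card of subtype = B.card
    have hcardB : (Nat.card {G : Matrix (Fin k) (Fin n) (ZMod 2) // P G}) = B.card := by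
      rw [Nat.card_eq_fintype_card, Fintype.card_subtype]
    -- subset of union over V
    have hsub : B ⊆ V.biUnion (fun v => Finset.univ.filter
        (fun G : Matrix (Fin k) (Fin n) (ZMod 2) => ∃ u, Matrix.vecMul u G = v)) := by
      intro G hG
      rw [hB, Finset.mem_filter] at hG
      have hPG := hG.2
      rw [hP] at hPG
      push_neg at hPG
      obtain ⟨c, hcr, hc0, hcd⟩ := hPG
      obtain ⟨u, hu⟩ := hcr
      rw [Finset.mem_biUnion]
      refine ⟨c, ?_, ?_⟩
      · rw [hV, Finset.mem_filter]
        refine ⟨Finset.mem_univ _, hc0, ?_⟩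
        have hd : hammingDist e c = hammingNorm (e + c) := by
          rw [hammingDist_eq_hammingNorm, neg_add_eq_sub, pi_sub_eq_add, add_comm]
        rw [← hd]
        exact le_trans hcd he
      · simp only [Finset.mem_filter, Finset.mem_univ, true_and]
        exact ⟨u, hu⟩
    -- per-v bound
    have hperv : ∀ v ∈ V, (Finset.univ.filter
        (fun G : Matrix (Fin k) (Fin n) (ZMod 2) => ∃ u, Matrix.vecMul u G = v)).card
          ≤ 2^k * 2^((k-1)*n) := by
      intro v hv
      rw [hV, Finset.mem_filter] at hv
      have hv0 : v ≠ 0 := hv.2.1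
      have hsub2 : (Finset.univ.filter
          (fun G : Matrix (Fin k) (Fin n) (ZMod 2) => ∃ u, Matrix.vecMul u G = v))
          ⊆ (Finset.univ : Finset (Fin k → ZMod 2)).biUnion (fun u =>
              Finset.univ.filter (fun G => Matrix.vecMul u G = v)) := by
        intro G hG
        simp only [Finset.mem_filter, Finset.mem_univ, true_and] at hG
        obtain ⟨u, hu⟩ := hG
        rw [Finset.mem_biUnion]
        exact ⟨u, Finset.mem_univ _, by simp [hu]⟩
      refine (Finset.card_le_card hsub2).trans ?_
      refine (Finset.card_biUnion_le).trans ?_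
      have hfib : ∀ u : Fin k → ZMod 2, (Finset.univ.filter
          (fun G : Matrix (Fin k) (Fin n) (ZMod 2) => Matrix.vecMul u G = v)).card
            ≤ 2^((k-1)*n) := by
        intro u
        rcases eq_or_ne u 0 with rfl | hu0
        · have : (Finset.univ.filter
              (fun G : Matrix (Fin k) (Fin n) (ZMod 2) => Matrix.vecMul 0 G = v)) = ∅ := by
            apply Finset.filter_false_of_mem
            intro G _
            rw [Matrix.zero_vecMul]
            exact fun h => hv0 h.symm
          rw [this]
          simp
        · rw [fiber_card k n u hu0 v]
      calc ∑ u : Fin k → ZMod 2, (Finset.univ.filter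
            (fun G : Matrix (Fin k) (Fin n) (ZMod 2) => Matrix.vecMul u G = v)).card
          ≤ ∑ _u : Fin k → ZMod 2, 2^((k-1)*n) := Finset.sum_le_sum (fun u _ => hfib u)
        _ = 2^k * 2^((k-1)*n) := by
            rw [Finset.sum_const, Finset.card_univ, Fintype.card_fun, ZMod.card,
              Fintype.card_fin, smul_eq_mul]
    -- V card bound
    have hVcard : V.card ≤ ∑ i ∈ Finset.range (t+1), n.choose i := by
      refine le_trans ?_ (ball_card n t)
      apply Finset.card_le_card_of_injOn (fun v => e + v)
      · intro v hv
        rw [hV, Finset.mem_coe, Finset.mem_filter] at hv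
        simp only [Finset.mem_coe, Finset.mem_filter, Finset.mem_univ, true_and]
        exact hv.2.2
      · intro v _ w _ hvw
        exact add_left_cancel hvw
    -- B card bound
    have hBcard : B.card ≤ (∑ i ∈ Finset.range (t+1), n.choose i) * (2^k * 2^((k-1)*n)) := by
      refine (Finset.card_le_card hsub).trans ?_
      refine (Finset.card_biUnion_le).trans ?_
      calc ∑ v ∈ V, (Finset.univ.filter
            (fun G : Matrix (Fin k) (Fin n) (ZMod 2) => ∃ u, Matrix.vecMul u G = v)).card
          ≤ ∑ _v ∈ V, 2^k * 2^((k-1)*n) := Finset.sum_le_sum hperv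
        _ = V.card * (2^k * 2^((k-1)*n)) := by rw [Finset.sum_const, smul_eq_mul]
        _ ≤ _ := Nat.mul_le_mul_right _ hVcard
    -- matrix count
    have hMat : Fintype.card (Matrix (Fin k) (Fin n) (ZMod 2)) = 2^(k*n) := by
      have h0 : Fintype.card (Matrix (Fin k) (Fin n) (ZMod 2))
          = Fintype.card (Fin k → Fin n → ZMod 2) := rfl
      rw [h0, Fintype.card_fun, Fintype.card_fun, ZMod.card, Fintype.card_fin,
        Fintype.card_fin, ← pow_mul, mul_comm n k]
    have hMat' : (Nat.card (Matrix (Fin k) (Fin n) (ZMod 2))) = 2^(k*n) := by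
      rw [Nat.card_eq_fintype_card, hMat]
    have hD : (0:ℝ) < ((2:ℝ)^(k*n) : ℝ) := by positivity
    rw [hcardB, hMat']
    push_cast
    rw [div_le_iff₀ (by positivity)]
    -- entropy bound pieces
    set p : ℝ := (t:ℝ)/n with hp_def
    have hp : 0 < p := div_pos (by exact_mod_cast ht) hn'
    have hS := sum_choose_le n t hn ht hhalf
    have hHnonneg : 0 ≤ binEnt p := by
      have l1 : Real.logb 2 p ≤ 0 :=
        Real.logb_nonpos (by norm_num) hp.le (by linarith)
      have l2 : Real.logb 2 (1-p) ≤ 0 :=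
        Real.logb_nonpos (by norm_num) (by linarith) (by linarith)
      unfold binEnt
      nlinarith [mul_nonneg hp.le (neg_nonneg.2 l1),
        mul_nonneg (by linarith : (0:ℝ) ≤ 1 - p) (neg_nonneg.2 l2)]
    have hexp2 : (n:ℝ) * (binEnt p - (r:ℝ)/n) = (n:ℝ) * binEnt p - r := by
      field_simp
    rw [hexp2, Real.rpow_sub (by norm_num : (0:ℝ) < 2)]
    have hr2 : (2:ℝ) ^ ((r:ℝ)) = (2:ℝ)^(r:ℕ) := Real.rpow_natCast 2 r
    rw [hr2]
    -- now two cases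
    rcases le_or_gt k n with hkn | hkn
    · have hrkn : r ≤ k*n := by
        have : r ≤ n := by omega
        calc r ≤ n := this
          _ ≤ k*n := Nat.le_mul_of_pos_left n hk
      have hexpnat : k + (k-1)*n = k*n - r := by
        have hk1 : 1 ≤ k := hk
        subst hr
        rcases Nat.exists_eq_add_of_le hk1 with ⟨k', rfl⟩
        have e1 : 1 + k' - 1 = k' := by omega
        rw [e1, add_mul, one_mul]
        omega
      have key : (B.card : ℝ) ≤ (∑ i ∈ Finset.range (t+1), (n.choose i : ℝ)) * (2:ℝ)^(k + (k-1)*n) := by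
        have := hBcard
        have hcast : (B.card : ℝ) ≤ ((∑ i ∈ Finset.range (t+1), n.choose i) * (2^k * 2^((k-1)*n)) : ℕ) := by
          exact_mod_cast this
        refine hcast.trans (le_of_eq ?_)
        push_cast
        rw [← pow_add]
      refine key.trans ?_
      rw [hexpnat]
      have hsplit : (2:ℝ)^(k*n - r : ℕ) = (2:ℝ)^(k*n) / (2:ℝ)^(r:ℕ) := by
        rw [eq_div_iff (by positivity), ← pow_add]
        congr 1
        omega
      rw [hsplit]
      rw [div_le_iff₀ (by positivity)] at *
      calc (∑ i ∈ Finset.range (t+1), (n.choose i : ℝ)) * ((2:ℝ)^(k*n) / (2:ℝ)^(r:ℕ))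
          ≤ (2:ℝ) ^ ((n:ℝ) * binEnt p) * ((2:ℝ)^(k*n) / (2:ℝ)^(r:ℕ)) := by
            apply mul_le_mul_of_nonneg_right hS (by positivity)
        _ = (2:ℝ) ^ ((n:ℝ) * binEnt p) / (2:ℝ)^(r:ℕ) * (2:ℝ)^(k*n) := by ring
    · -- k > n, so r = 0
      have hr0 : r = 0 := by omega
      subst hr0
      have hBle : (B.card : ℝ) ≤ (2:ℝ)^(k*n) := by
        have : B.card ≤ Fintype.card (Matrix (Fin k) (Fin n) (ZMod 2)) := by
          rw [← Finset.card_univ]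
          exact Finset.card_le_card (Finset.subset_univ _)
        rw [hMat] at this
        exact_mod_cast this
      refine hBle.trans ?_
      have h1le : (1:ℝ) ≤ (2:ℝ) ^ ((n:ℝ) * binEnt p) :=
        Real.one_le_rpow (by norm_num) (by positivity)
      calc ((2:ℝ)^(k*n) : ℝ) = 1 * (2:ℝ)^(k*n) := by ring
        _ ≤ (2:ℝ) ^ ((n:ℝ) * binEnt p) * (2:ℝ)^(k*n) := by
            apply mul_le_mul_of_nonneg_right h1le (by positivity)
        _ = (2:ℝ) ^ ((n:ℝ) * binEnt p) / (2:ℝ)^(0:ℕ) * (2:ℝ)^(k*n) := by norm_num
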